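/- For permutations σ, ν of size n with σ ≤_P ν in the permutohedron order, the maximal elements of their Baxter classes satisfy σ↑ ≤_P ν↑, and the minimal elements satisfy σ↓ ≤_P ν↓. -/

import Mathlib

open scoped Classical

/-- Baxter adjacency relations on words over the alphabet of natural numbers. -/
def BaxterAdj (w w' : List ℕ) : Prop :=
  (∃ (a b c d : ℕ) (u v : List ℕ), a ≤ b ∧ b < c ∧ c ≤ d ∧
      w = c :: (u ++ a :: d :: (v ++ [b])) ∧ w' = c :: (u ++ d :: a :: (v ++ [b]))) ∨
  (∃ (a b c d : ℕ) (u v : List ℕ), a < b ∧ b ≤ c ∧ c < d ∧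
      w = b :: (u ++ d :: a :: (v ++ [c])) ∧ w' = b :: (u ++ a :: d :: (v ++ [c])))

/-- One rewriting step: an adjacency applied inside a word (congruence context). -/
def BaxterStep (w w' : List ℕ) : Prop :=
  ∃ (p s u v : List ℕ), BaxterAdj u v ∧ w = p ++ u ++ s ∧ w' = p ++ v ++ s

/-- The Baxter congruence: the equivalence generated by the Baxter steps. -/
def BaxterEquiv : List ℕ → List ℕ → Prop := Relation.EqvGen BaxterStep

/-- Sylvester adjacency: a c u b ≡ c a u b when a ≤ b < c. -/
def SylvAdj (w w' : List ℕ) : Prop :=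
  ∃ (a b c : ℕ) (u : List ℕ), a ≤ b ∧ b < c ∧
    w = a :: c :: (u ++ [b]) ∧ w' = c :: a :: (u ++ [b])

def SylvStep (w w' : List ℕ) : Prop :=
  ∃ (p s u v : List ℕ), SylvAdj u v ∧ w = p ++ u ++ s ∧ w' = p ++ v ++ s

def SylvEquiv : List ℕ → List ℕ → Prop := Relation.EqvGen SylvStep

/-- #-sylvester adjacency: b u a c ≡ b u c a when a < b ≤ c. -/
def SylvHAdj (w w' : List ℕ) : Prop :=
  ∃ (a b c : ℕ) (u : List ℕ), a < b ∧ b ≤ c ∧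
    w = b :: (u ++ [a, c]) ∧ w' = b :: (u ++ [c, a])

def SylvHStep (w w' : List ℕ) : Prop :=
  ∃ (p s u v : List ℕ), SylvHAdj u v ∧ w = p ++ u ++ s ∧ w' = p ++ v ++ s

def SylvHEquiv : List ℕ → List ℕ → Prop := Relation.EqvGen SylvHStep

/-- The standardized word of `u`: position `i` receives the rank of the letter `u i`
(ties broken from left to right), ranks starting at `1`. -/
def std (u : List ℕ) : List ℕ :=
  (List.range u.length).map fun i =>
    ((List.range u.length).filter fun j =>
      decide (u.getD j 0 < u.getD i 0 ∨ (u.getD j 0 = u.getD i 0 ∧ j < i))).length + 1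

/-- The maximal letter of a word. -/
def wordMax (u : List ℕ) : ℕ := u.foldr max 0

/-- The Schützenberger transformation: reverse and complement each letter w.r.t. max + 1. -/
def schutz (u : List ℕ) : List ℕ := u.reverse.map fun x => wordMax u + 1 - x

/-- Labeled binary trees. -/
inductive BT where
  | leaf : BT
  | node : BT → ℕ → BT → BT
deriving DecidableEq

/-- Leaf insertion into a left binary search tree. -/
def leafInsL : BT → ℕ → BT
  | .leaf, a => .node .leaf a .leaf
  | .node l b r, a => if a < b then .node (leafInsL l a) b r else .node l b (leafInsL r a)

/-- Leaf insertion into a right binary search tree. -/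
def leafInsR : BT → ℕ → BT
  | .leaf, a => .node .leaf a .leaf
  | .node l b r, a => if a ≤ b then .node (leafInsR l a) b r else .node l b (leafInsR r a)

/-- The lower restricted tree `T_{≤ a}` of a right binary search tree. -/
def splitLE : BT → ℕ → BT
  | .leaf, _ => .leaf
  | .node l b r, a => if b ≤ a then .node l b (splitLE r a) else splitLE l a

/-- The higher restricted tree `T_{> a}` of a right binary search tree. -/
def splitGT : BT → ℕ → BT
  | .leaf, _ => .leaf
  | .node l b r, a => if b ≤ a then splitGT r a else .node (splitGT l a) b r

/-- Root insertion into a right binary search tree. -/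
def rootIns (t : BT) (a : ℕ) : BT := .node (splitLE t a) a (splitGT t a)

/-- The left tree of the P-symbol: leaf insertions from left to right. -/
def insL (u : List ℕ) : BT := u.foldl leafInsL .leaf

/-- The right tree of the P-symbol: root insertions from left to right. -/
def insR (u : List ℕ) : BT := u.foldl rootIns .leaf

/-- The P-symbol of a word. -/
def Psymb (u : List ℕ) : BT × BT := (insL u, insR u)

/-- Unlabeled binary trees. -/
inductive UBT where
  | leaf : UBT
  | node : UBT → UBT → UBT
deriving DecidableEq

/-- The shape of a labeled binary tree. -/
def shape : BT → UBT
  | .leaf => .leaf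
  | .node l _ r => .node (shape l) (shape r)

/-- The shape of the P-symbol of a word. -/
def Pshape (u : List ℕ) : UBT × UBT := (shape (insL u), shape (insR u))

/-- Number of internal nodes. -/
def sizeU : UBT → ℕ
  | .leaf => 0
  | .node l r => sizeU l + sizeU r + 1

/-- Orientations of the leaves, from left to right: `true` means right-oriented
(the leaf is the right child of its parent); the parameter is the orientation
assigned if the tree is reduced to a leaf. -/
def loU : UBT → Bool → List Bool
  | .leaf, b => [b]
  | .node l r, _ => loU l false ++ loU r true

/-- Leaf orientations of a labeled binary tree. -/
def loB : BT → Bool → List Bool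
  | .leaf, b => [b]
  | .node l _ r, _ => loB l false ++ loB r true

/-- The canopy: orientations of the leaves except the first and the last one. -/
def canU (t : UBT) : List Bool := ((loU t false).drop 1).dropLast

/-- A pair of twin binary trees: same number of nodes and complementary canopies. -/
def IsTwin (J : UBT × UBT) : Prop :=
  sizeU J.1 = sizeU J.2 ∧ (canU J.1).length = (canU J.2).length ∧
    ∀ i < (canU J.1).length, (canU J.1).getD i false ≠ (canU J.2).getD i false

/-- `σ` is (the word of) a permutation of `{1, …, n}`. -/
def IsPerm (n : ℕ) (σ : List ℕ) : Prop := σ.Perm (List.range' 1 n)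

/-- Covering-type step of the right permutohedron (weak) order: exchange of two
adjacent letters `a < b`. -/
def PermutoStep (σ ν : List ℕ) : Prop :=
  ∃ (p s : List ℕ) (a b : ℕ), a < b ∧ σ = p ++ a :: b :: s ∧ ν = p ++ b :: a :: s

/-- The right permutohedron (weak) order. -/
def PermutoLe : List ℕ → List ℕ → Prop := Relation.ReflTransGen PermutoStep

/-- Baxter permutations: avoiding the generalized patterns 2-41-3 and 3-14-2. -/
def IsBaxterPerm (σ : List ℕ) : Prop :=
  ∀ i j k, i < j → j + 1 < k → k < σ.length →
    ¬(σ.getD (j+1) 0 < σ.getD i 0 ∧ σ.getD i 0 < σ.getD k 0 ∧ σ.getD k 0 < σ.getD j 0) ∧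
    ¬(σ.getD j 0 < σ.getD k 0 ∧ σ.getD k 0 < σ.getD i 0 ∧ σ.getD i 0 < σ.getD (j+1) 0)

-- ===== auxiliary development =====
def UpAt (g h a d : ℕ) : Prop :=
  (a ≤ h ∧ h < g ∧ g ≤ d) ∨ (a < g ∧ g ≤ h ∧ h < d)

def UpStep (w w' : List ℕ) : Prop :=
  ∃ g h a d : ℕ, ∃ u v p s : List ℕ, UpAt g h a d ∧
    w = p ++ (g :: (u ++ a :: d :: (v ++ [h]))) ++ s ∧
    w' = p ++ (g :: (u ++ d :: a :: (v ++ [h]))) ++ s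

def Dn (w w' : List ℕ) : Prop := UpStep w' w

theorem upAt_ad {g h a d : ℕ} (hp : UpAt g h a d) : a < d := by
  rcases hp with ⟨h1,h2,h3⟩|⟨h1,h2,h3⟩ <;> omega

theorem upAt_ag {g h a d : ℕ} (hp : UpAt g h a d) : a < g := by
  rcases hp with ⟨h1,h2,h3⟩|⟨h1,h2,h3⟩ <;> omega

theorem upAt_hd {g h a d : ℕ} (hp : UpAt g h a d) : h < d := by
  rcases hp with ⟨h1,h2,h3⟩|⟨h1,h2,h3⟩ <;> omega

theorem upAt_ah {g h a d : ℕ} (hp : UpAt g h a d) : a ≤ h := by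
  rcases hp with ⟨h1,h2,h3⟩|⟨h1,h2,h3⟩ <;> omega

theorem upAt_gd {g h a d : ℕ} (hp : UpAt g h a d) : g ≤ d := by
  rcases hp with ⟨h1,h2,h3⟩|⟨h1,h2,h3⟩ <;> omega

theorem upAt_left {g h a d w : ℕ} (hp : UpAt g h a d) (hw : w < a) : UpAt g h w d := by
  rcases hp with ⟨h1,h2,h3⟩|⟨h1,h2,h3⟩
  · exact Or.inl ⟨by omega, h2, h3⟩
  · exact Or.inr ⟨by omega, h2, h3⟩

theorem upAt_right {g h a d z : ℕ} (hp : UpAt g h a d) (hz : d < z) : UpAt g h a z := by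
  rcases hp with ⟨h1,h2,h3⟩|⟨h1,h2,h3⟩
  · exact Or.inl ⟨h1, h2, by omega⟩
  · exact Or.inr ⟨h1, h2, by omega⟩

theorem upStep_of_eq {w w' : List ℕ} (g h a d : ℕ) (u v p s : List ℕ)
    (hp : UpAt g h a d)
    (hw : w = p ++ (g :: (u ++ a :: d :: (v ++ [h]))) ++ s)
    (hw' : w' = p ++ (g :: (u ++ d :: a :: (v ++ [h]))) ++ s) : UpStep w w' :=
  ⟨g, h, a, d, u, v, p, s, hp, hw, hw'⟩

theorem permutoStep_of_eq {w w' : List ℕ} (p s : List ℕ) (a b : ℕ)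
    (hab : a < b) (hw : w = p ++ a :: b :: s) (hw' : w' = p ++ b :: a :: s) :
    PermutoStep w w' := ⟨p, s, a, b, hab, hw, hw'⟩

theorem upStep_permutoStep {w w' : List ℕ} (h' : UpStep w w') : PermutoStep w w' := by
  obtain ⟨g, h, a, d, u, v, p, s, hp, rfl, rfl⟩ := h'
  exact permutoStep_of_eq (p ++ g :: u) (v ++ [h] ++ s) a d (upAt_ad hp) (by simp) (by simp)

theorem upStep_baxterStep {w w' : List ℕ} (h' : UpStep w w') :
    BaxterStep w w' ∨ BaxterStep w' w := by
  obtain ⟨g, h, a, d, u, v, p, s, hp, rfl, rfl⟩ := h'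
  rcases hp with ⟨h1, h2, h3⟩ | ⟨h1, h2, h3⟩
  · exact Or.inl ⟨p, s, _, _, Or.inl ⟨a, h, g, d, u, v, h1, h2, h3, rfl, rfl⟩, rfl, rfl⟩
  · exact Or.inr ⟨p, s, _, _, Or.inr ⟨a, g, h, d, u, v, h1, h2, h3, rfl, rfl⟩, rfl, rfl⟩

theorem baxterStep_up {w w' : List ℕ} (h' : BaxterStep w w') :
    UpStep w w' ∨ UpStep w' w := by
  obtain ⟨p, s, U, V, hadj, rfl, rfl⟩ := h'
  rcases hadj with ⟨a, b, c, d, u, v, h1, h2, h3, rfl, rfl⟩ | ⟨a, b, c, d, u, v, h1, h2, h3, rfl, rfl⟩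
  · exact Or.inl ⟨c, b, a, d, u, v, p, s, Or.inl ⟨h1, h2, h3⟩, rfl, rfl⟩
  · exact Or.inr ⟨b, c, a, d, u, v, p, s, Or.inr ⟨h1, h2, h3⟩, rfl, rfl⟩

theorem upStep_equiv {w w' : List ℕ} (h : UpStep w w') : BaxterEquiv w w' := by
  rcases upStep_baxterStep h with h | h
  · exact Relation.EqvGen.rel _ _ h
  · exact Relation.EqvGen.symm _ _ (Relation.EqvGen.rel _ _ h)

theorem upChain_equiv {w w' : List ℕ} (h : Relation.ReflTransGen UpStep w w') :
    BaxterEquiv w w' := by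
  induction h with
  | refl => exact Relation.EqvGen.refl _
  | tail _ hstep ih => exact Relation.EqvGen.trans _ _ _ ih (upStep_equiv hstep)

theorem dnChain_equiv {w w' : List ℕ} (h : Relation.ReflTransGen Dn w w') :
    BaxterEquiv w w' := by
  induction h with
  | refl => exact Relation.EqvGen.refl _
  | tail _ hstep ih =>
      exact Relation.EqvGen.trans _ _ _ ih (Relation.EqvGen.symm _ _ (upStep_equiv hstep))

theorem permutoStep_perm {w w' : List ℕ} (h : PermutoStep w w') : w.Perm w' := by
  obtain ⟨p, s, a, b, _, rfl, rfl⟩ := h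
  exact (List.Perm.append_left p (List.Perm.swap b a s))

theorem permutoLe_perm {w w' : List ℕ} (h : PermutoLe w w') : w.Perm w' := by
  induction h with
  | refl => exact List.Perm.refl _
  | tail _ hstep ih => exact ih.trans (permutoStep_perm hstep)

theorem baxterEquiv_perm {w w' : List ℕ} (h : BaxterEquiv w w') : w.Perm w' := by
  induction h with
  | rel a b hab =>
      rcases baxterStep_up hab with h | h
      · exact permutoStep_perm (upStep_permutoStep h)
      · exact (permutoStep_perm (upStep_permutoStep h)).symm
  | refl a => exact List.Perm.refl _
  | symm a b _ ih => exact ih.symm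
  | trans a b c _ _ ih1 ih2 => exact ih1.trans ih2

-- inversion count
def invc : List ℕ → ℕ
  | [] => 0
  | a :: t => t.countP (fun b => decide (b < a)) + invc t

theorem invc_swap (p s : List ℕ) (x y : ℕ) (h : x < y) :
    invc (p ++ y :: x :: s) = invc (p ++ x :: y :: s) + 1 := by
  induction p with
  | nil =>
      simp only [List.nil_append, invc, List.countP_cons]
      have h1 : decide (x < y) = true := by simp [h]
      have h2 : decide (y < x) = false := by simp; omega
      rw [h1, h2]
      simp; omega
  | cons a p ih =>
      simp only [List.cons_append, invc, List.append_eq]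
      have hperm : (p ++ y :: x :: s).Perm (p ++ x :: y :: s) :=
        List.Perm.append_left p (List.Perm.swap x y s)
      rw [hperm.countP_eq, ih]
      omega

theorem permutoStep_invc {x y : List ℕ} (h : PermutoStep x y) : invc y = invc x + 1 := by
  obtain ⟨p, s, a, b, hab, rfl, rfl⟩ := h
  exact invc_swap p s a b hab

theorem permutoStep_length {x y : List ℕ} (h : PermutoStep x y) : y.length = x.length := by
  obtain ⟨p, s, a, b, hab, rfl, rfl⟩ := h
  simp

theorem invc_len : ∀ l : List ℕ, invc l + l.length ≤ l.length * l.length := by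
  intro l
  induction l with
  | nil => simp [invc]
  | cons a t ih =>
      have hc : t.countP (fun b => decide (b < a)) ≤ t.length := List.countP_le_length
      simp only [invc, List.length_cons]
      have : (t.length + 1) * (t.length + 1) = t.length * t.length + 2 * t.length + 1 := by ring
      omega

def phi (l : List ℕ) : ℕ := l.length * l.length - invc l

theorem step_phi {x y : List ℕ} (h : PermutoStep x y) :
    phi y + 1 = phi x ∧ 1 ≤ phi x := by
  have h1 := permutoStep_invc h
  have h2 := permutoStep_length h
  have h3 := invc_len y
  have h4 : 2 ≤ x.length := by
    obtain ⟨p, s, a, b, hab, rfl, rfl⟩ := h; simp; omega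
  unfold phi
  rw [h2] at h3 ⊢
  generalize x.length * x.length = M at *
  omega

-- decomposition lemmas
theorem decomp0 : ∀ (m P : List ℕ) (S s : List ℕ) (x y : ℕ),
    P ++ x :: y :: S = m ++ s →
    (∃ m1 m2, m = m1 ++ x :: y :: m2 ∧ P = m1 ∧ S = m2 ++ s) ∨
    (∃ m' s', m = m' ++ [x] ∧ s = y :: s' ∧ P = m' ∧ S = s') ∨
    (∃ t, s = t ++ x :: y :: S ∧ P = m ++ t) := by
  intro m
  induction m with
  | nil =>
      intro P S s x y heq
      exact Or.inr (Or.inr ⟨P, by simpa using heq.symm, by simp⟩)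
  | cons z m' ih =>
      intro P S s x y heq
      cases P with
      | nil =>
          simp only [List.nil_append, List.cons_append] at heq
          obtain ⟨h1, heq2⟩ : x = z ∧ y :: S = m' ++ s := by
            injection heq with a b; exact ⟨a, b⟩
          subst h1
          cases m' with
          | nil =>
              refine Or.inr (Or.inl ⟨[], S, by simp, ?_, by simp, rfl⟩)
              simpa using heq2.symm
          | cons w m'' =>
              simp only [List.cons_append] at heq2
              obtain ⟨h1, heq3⟩ : y = w ∧ S = m'' ++ s := by
                injection heq2 with a b; exact ⟨a, b⟩
              subst h1
              exact Or.inl ⟨[], m'', by simp, rfl, heq3⟩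
      | cons q P' =>
          simp only [List.cons_append] at heq
          obtain ⟨h1, heq2⟩ : q = z ∧ P' ++ x :: y :: S = m' ++ s := by
            injection heq with a b; exact ⟨a, b⟩
          subst h1
          rcases ih P' S s x y heq2 with ⟨m1, m2, hm', hP, hS⟩ | ⟨m0, s', hm', hs, hP, hS⟩ | ⟨t, hs, hP⟩
          · exact Or.inl ⟨q :: m1, m2, by simp [hm'], by simp [hP], hS⟩
          · exact Or.inr (Or.inl ⟨q :: m0, s', by simp [hm'], hs, by simp [hP], hS⟩)
          · exact Or.inr (Or.inr ⟨t, hs, by simp [hP]⟩)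

theorem decomp : ∀ (p : List ℕ) (m s P S : List ℕ) (x y : ℕ), m ≠ [] →
    P ++ x :: y :: S = p ++ m ++ s →
    (∃ t, p = P ++ x :: y :: t ∧ S = t ++ m ++ s) ∨
    (∃ p' m', p = p' ++ [x] ∧ m = y :: m' ∧ P = p' ∧ S = m' ++ s) ∨
    (∃ m1 m2, m = m1 ++ x :: y :: m2 ∧ P = p ++ m1 ∧ S = m2 ++ s) ∨
    (∃ m' s', m = m' ++ [x] ∧ s = y :: s' ∧ P = p ++ m' ∧ S = s') ∨
    (∃ t, s = t ++ x :: y :: S ∧ P = p ++ m ++ t) := by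
  intro p
  induction p with
  | nil =>
      intro m s P S x y hm heq
      simp only [List.nil_append] at heq
      rcases decomp0 m P S s x y heq with ⟨m1, m2, hm', hP, hS⟩ | ⟨m0, s', hm', hs, hP, hS⟩ | ⟨t, hs, hP⟩
      · exact Or.inr (Or.inr (Or.inl ⟨m1, m2, hm', by simp [hP], hS⟩))
      · exact Or.inr (Or.inr (Or.inr (Or.inl ⟨m0, s', hm', hs, by simp [hP], hS⟩)))
      · exact Or.inr (Or.inr (Or.inr (Or.inr ⟨t, hs, by simp [hP]⟩)))
  | cons z p' ih =>
      intro m s P S x y hm heq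
      cases P with
      | nil =>
          simp only [List.nil_append, List.cons_append] at heq
          obtain ⟨h1, heq2⟩ : x = z ∧ y :: S = p' ++ m ++ s := by
            injection heq with a b; exact ⟨a, b⟩
          subst h1
          cases p' with
          | nil =>
              simp only [List.nil_append] at heq2
              cases m with
              | nil => exact absurd rfl hm
              | cons w m'' =>
                  simp only [List.cons_append] at heq2
                  obtain ⟨h1, hS⟩ : y = w ∧ S = m'' ++ s := by
                    injection heq2 with a b; exact ⟨a, b⟩
                  subst h1
                  exact Or.inr (Or.inl ⟨[], m'', by simp, rfl, rfl, hS⟩)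
          | cons w p'' =>
              simp only [List.cons_append] at heq2
              obtain ⟨h1, hS⟩ : y = w ∧ S = p'' ++ m ++ s := by
                injection heq2 with a b; exact ⟨a, b⟩
              subst h1
              exact Or.inl ⟨p'', by simp, hS⟩
      | cons q P' =>
          simp only [List.cons_append] at heq
          obtain ⟨h1, heq2⟩ : q = z ∧ P' ++ x :: y :: S = p' ++ m ++ s := by
            injection heq with a b; exact ⟨a, b⟩
          subst h1
          rcases ih m s P' S x y hm heq2 with ⟨t, hp, hS⟩ | ⟨p1, m', hp, hm', hP, hS⟩ |
            ⟨m1, m2, hm', hP, hS⟩ | ⟨m', s', hm', hs, hP, hS⟩ | ⟨t, hs, hP⟩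
          · exact Or.inl ⟨t, by simp [hp], hS⟩
          · exact Or.inr (Or.inl ⟨q :: p1, m', by simp [hp], hm', by simp [hP], hS⟩)
          · exact Or.inr (Or.inr (Or.inl ⟨m1, m2, hm', by simp [hP], hS⟩))
          · exact Or.inr (Or.inr (Or.inr (Or.inl ⟨m', s', hm', hs, by simp [hP], hS⟩)))
          · exact Or.inr (Or.inr (Or.inr (Or.inr ⟨t, hs, by simp [hP]⟩)))

theorem snoc_inj {l1 l2 : List ℕ} {a b : ℕ} (h : l1 ++ [a] = l2 ++ [b]) :
    l1 = l2 ∧ a = b := by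
  have h2 := List.append_inj' h (by simp)
  exact ⟨h2.1, by simpa using h2.2⟩

theorem inner_decomp (m1 m2 u v : List ℕ) (g h a d x y : ℕ)
    (H : m1 ++ x :: y :: m2 = g :: (u ++ a :: d :: (v ++ [h]))) :
    (∃ u', u = y :: u' ∧ x = g ∧ m1 = [] ∧ m2 = u' ++ a :: d :: (v ++ [h])) ∨
    (u = [] ∧ x = g ∧ y = a ∧ m1 = [] ∧ m2 = d :: (v ++ [h])) ∨
    (∃ u1 t, u = u1 ++ x :: y :: t ∧ m1 = g :: u1 ∧ m2 = t ++ a :: d :: (v ++ [h])) ∨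
    (∃ u', u = u' ++ [x] ∧ y = a ∧ m1 = g :: u' ∧ m2 = d :: (v ++ [h])) ∨
    (x = a ∧ y = d ∧ m1 = g :: u ∧ m2 = v ++ [h]) ∨
    (∃ v', v = y :: v' ∧ x = d ∧ m1 = g :: (u ++ [a]) ∧ m2 = v' ++ [h]) ∨
    (v = [] ∧ x = d ∧ y = h ∧ m1 = g :: (u ++ [a]) ∧ m2 = []) ∨
    (∃ v1 t, v = v1 ++ x :: y :: t ∧ m1 = g :: (u ++ a :: d :: v1) ∧ m2 = t ++ [h]) ∨
    (∃ v', v = v' ++ [x] ∧ y = h ∧ m1 = g :: (u ++ a :: d :: v') ∧ m2 = []) := by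
  cases m1 with
  | nil =>
      simp only [List.nil_append] at H
      obtain ⟨hxg, H2⟩ : x = g ∧ y :: m2 = u ++ a :: d :: (v ++ [h]) := by
        injection H with h1 h2; exact ⟨h1, h2⟩
      cases u with
      | nil =>
          simp only [List.nil_append] at H2
          obtain ⟨hya, hm2⟩ : y = a ∧ m2 = d :: (v ++ [h]) := by
            injection H2 with h1 h2; exact ⟨h1, h2⟩
          exact Or.inr (Or.inl ⟨rfl, hxg, hya, rfl, hm2⟩)
      | cons z u' =>
          simp only [List.cons_append] at H2
          obtain ⟨hyz, hm2⟩ : y = z ∧ m2 = u' ++ a :: d :: (v ++ [h]) := by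
            injection H2 with h1 h2; exact ⟨h1, h2⟩
          exact Or.inl ⟨u', by rw [hyz], hxg, rfl, hm2⟩
  | cons w m1' =>
      simp only [List.cons_append] at H
      obtain ⟨hwg, H2⟩ : w = g ∧ m1' ++ x :: y :: m2 = u ++ a :: d :: (v ++ [h]) := by
        injection H with h1 h2; exact ⟨h1, h2⟩
      subst hwg
      have H3 : m1' ++ x :: y :: m2 = u ++ [a, d] ++ (v ++ [h]) := by
        rw [H2]; simp
      rcases decomp u [a, d] (v ++ [h]) m1' m2 x y (by simp) H3 with
        ⟨t, hu, hS⟩ | ⟨p', m', hu, hm, hP, hS⟩ | ⟨q1, q2, hm, hP, hS⟩ |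
        ⟨m', s', hm, hs, hP, hS⟩ | ⟨t, hs, hP⟩
      · -- inside u
        refine Or.inr (Or.inr (Or.inl ⟨m1', t, hu, rfl, ?_⟩))
        rw [hS]; simp
      · -- boundary (last u, a)
        obtain ⟨hya, hm'⟩ : y = a ∧ m' = [d] := by
          injection hm with h1 h2; exact ⟨h1.symm, h2.symm⟩
        refine Or.inr (Or.inr (Or.inr (Or.inl ⟨p', hu, hya, by rw [hP], ?_⟩)))
        rw [hS, hm']; simp
      · -- inside [a,d]
        rcases q1 with _ | ⟨e, q1'⟩
        · simp only [List.nil_append] at hm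
          obtain ⟨hxa, hm2⟩ : a = x ∧ [d] = y :: q2 := by
            injection hm with h1 h2; exact ⟨h1, h2⟩
          obtain ⟨hyd, hq2⟩ : d = y ∧ q2 = [] := by
            injection hm2 with h1 h2; exact ⟨h1, h2.symm⟩
          refine Or.inr (Or.inr (Or.inr (Or.inr (Or.inl
            ⟨hxa.symm, hyd.symm, by rw [hP]; simp, ?_⟩))))
          rw [hS, hq2]; simp
        · rcases q1' with _ | ⟨f, q1''⟩
          · exfalso
            simp only [List.cons_append, List.nil_append] at hm
            obtain ⟨_, hm2⟩ : a = e ∧ [d] = x :: y :: q2 := by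
              injection hm with h1 h2; exact ⟨h1, h2⟩
            obtain ⟨_, hm3⟩ : d = x ∧ ([] : List ℕ) = y :: q2 := by
              injection hm2 with h1 h2; exact ⟨h1, h2⟩
            exact List.cons_ne_nil _ _ hm3.symm
          · exfalso
            simp only [List.cons_append] at hm
            obtain ⟨_, hm2⟩ : a = e ∧ [d] = f :: (q1'' ++ x :: y :: q2) := by
              injection hm with h1 h2; exact ⟨h1, h2⟩
            obtain ⟨_, hm3⟩ : d = f ∧ ([] : List ℕ) = q1'' ++ x :: y :: q2 := by
              injection hm2 with h1 h2; exact ⟨h1, h2⟩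
            simp at hm3
      · -- boundary (d, head of v) or (d, h) when v = []
        have hxd : m' = [a] ∧ x = d := by
          have : ([a] : List ℕ) ++ [d] = m' ++ [x] := by simpa using hm
          obtain ⟨h1, h2⟩ := snoc_inj this
          exact ⟨h1.symm, h2.symm⟩
        obtain ⟨hm', hxd⟩ := hxd
        cases v with
        | nil =>
            simp only [List.nil_append] at hs
            obtain ⟨hyh, hs'⟩ : h = y ∧ s' = [] := by
              injection hs with h1 h2; exact ⟨h1, h2.symm⟩
            refine Or.inr (Or.inr (Or.inr (Or.inr (Or.inr (Or.inr (Or.inl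
              ⟨rfl, hxd, hyh.symm, ?_, ?_⟩))))))
            · rw [hP, hm']
            · simp [hS, hs']
        | cons z v' =>
            simp only [List.cons_append] at hs
            obtain ⟨hyz, hs'⟩ : z = y ∧ v' ++ [h] = s' := by
              injection hs with h1 h2; exact ⟨h1, h2⟩
            refine Or.inr (Or.inr (Or.inr (Or.inr (Or.inr (Or.inl
              ⟨v', by rw [hyz], hxd, ?_, ?_⟩)))))
            · rw [hP, hm']
            · rw [hS, ← hs']
      · -- inside v or boundary (last v, h)
        rcases List.eq_nil_or_concat m2 with hm2 | ⟨L, b, hm2⟩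
        · subst hm2
          have : v ++ [h] = (t ++ [x]) ++ [y] := by rw [hs]; simp
          obtain ⟨hv, hhy⟩ := snoc_inj this
          refine Or.inr (Or.inr (Or.inr (Or.inr (Or.inr (Or.inr (Or.inr (Or.inr
            ⟨t, hv, hhy.symm, ?_, rfl⟩)))))))
          rw [hP]; simp
        · have hm2' : m2 = L ++ [b] := by simpa using hm2
          subst hm2'
          have : v ++ [h] = (t ++ x :: y :: L) ++ [b] := by rw [hs]; simp
          obtain ⟨hv, hhb⟩ := snoc_inj this
          refine Or.inr (Or.inr (Or.inr (Or.inr (Or.inr (Or.inr (Or.inr (Or.inl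
            ⟨t, L, hv, ?_, by rw [hhb]⟩)))))))
          rw [hP]; simp


theorem ple_refl (a : List ℕ) : PermutoLe a a := Relation.ReflTransGen.refl
theorem ple_single {a b : List ℕ} (h : PermutoStep a b) : PermutoLe a b :=
  Relation.ReflTransGen.single h
theorem ple_trans {a b c : List ℕ} (h1 : PermutoLe a b) (h2 : PermutoLe b c) :
    PermutoLe a c := Relation.ReflTransGen.trans h1 h2
theorem ple_two {a b c : List ℕ} (h1 : PermutoStep a b) (h2 : PermutoStep b c) :
    PermutoLe a c := Relation.ReflTransGen.head h1 (Relation.ReflTransGen.single h2)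
theorem uchain_of_eq {a b : List ℕ} (h : a = b) : Relation.ReflTransGen UpStep a b :=
  h ▸ Relation.ReflTransGen.refl
theorem uchain_two {a b c : List ℕ} (h1 : UpStep a b) (h2 : UpStep b c) :
    Relation.ReflTransGen UpStep a c :=
  Relation.ReflTransGen.head h1 (Relation.ReflTransGen.single h2)

set_option maxHeartbeats 1000000 in
theorem coreUp {x y ν : List ℕ} (hup : UpStep x y) (hst : PermutoStep x ν) :
    ∃ μ, Relation.ReflTransGen UpStep ν μ ∧ PermutoLe y μ := by
  obtain ⟨g, h, a, d, u, v, p, s, hp, rfl, rfl⟩ := hup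
  obtain ⟨P, S, x₀, y₀, hxy, hx, rfl⟩ := hst
  rcases decomp p (g :: (u ++ a :: d :: (v ++ [h]))) s P S x₀ y₀ (by simp) hx.symm with
    ⟨t, hpe, hS⟩ | ⟨p', m', hpe, hm, hP, hS⟩ | ⟨m1, m2, hm, hP, hS⟩ |
    ⟨m', s', hm, hs, hP, hS⟩ | ⟨t, hs, hP⟩
  · -- swap inside p
    subst hpe hS
    exact ⟨(P ++ y₀ :: x₀ :: t) ++ (g :: (u ++ d :: a :: (v ++ [h]))) ++ s,
      Relation.ReflTransGen.single
        (upStep_of_eq g h a d u v (P ++ y₀ :: x₀ :: t) s hp (by simp) rfl),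
      ple_single (permutoStep_of_eq P (t ++ (g :: (u ++ d :: a :: (v ++ [h]))) ++ s)
        x₀ y₀ hxy (by simp) (by simp))⟩
  · -- boundary p | factor
    obtain ⟨hg, hm2⟩ : g = y₀ ∧ u ++ a :: d :: (v ++ [h]) = m' := by
      injection hm with h1 h2; exact ⟨h1, h2⟩
    subst hg hm2 hpe hP hS
    exact ⟨P ++ (g :: ((x₀ :: u) ++ d :: a :: (v ++ [h]))) ++ s,
      Relation.ReflTransGen.single
        (upStep_of_eq g h a d (x₀ :: u) v P s hp (by simp) rfl),
      ple_single (permutoStep_of_eq P ((u ++ d :: a :: (v ++ [h])) ++ s) x₀ g hxy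
        (by simp) (by simp))⟩
  · -- swap inside the factor
    subst hP hS
    rcases inner_decomp m1 m2 u v g h a d x₀ y₀ hm.symm with
      ⟨u', hu, hxg, hm1, hm2⟩ | ⟨hu, hxg, hya, hm1, hm2⟩ | ⟨u1, t, hu, hm1, hm2⟩ |
      ⟨u', hu, hya, hm1, hm2⟩ | ⟨hxa, hyd, hm1, hm2⟩ | ⟨v', hv, hxd, hm1, hm2⟩ |
      ⟨hv, hxd, hyh, hm1, hm2⟩ | ⟨v1, t, hv, hm1, hm2⟩ | ⟨v', hv, hyh, hm1, hm2⟩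
    · -- (g, head u)
      replace hxg := hxg.symm
      subst hu hxg hm1 hm2
      exact ⟨(p ++ [y₀]) ++ (g :: (u' ++ d :: a :: (v ++ [h]))) ++ s,
        Relation.ReflTransGen.single
          (upStep_of_eq g h a d u' v (p ++ [y₀]) s hp (by simp) rfl),
        ple_single (permutoStep_of_eq p ((u' ++ d :: a :: (v ++ [h])) ++ s) g y₀ hxy
          (by simp) (by simp))⟩
    · -- (g, a) impossible
      exfalso; subst hxg hya; have := upAt_ag hp; omega
    · -- inside u
      subst hu hm1 hm2
      exact ⟨p ++ (g :: ((u1 ++ y₀ :: x₀ :: t) ++ d :: a :: (v ++ [h]))) ++ s,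
        Relation.ReflTransGen.single
          (upStep_of_eq g h a d (u1 ++ y₀ :: x₀ :: t) v p s hp (by simp) rfl),
        ple_single (permutoStep_of_eq (p ++ g :: u1) ((t ++ d :: a :: (v ++ [h])) ++ s)
          x₀ y₀ hxy (by simp) (by simp))⟩
    · -- (last u, a)
      replace hya := hya.symm
      subst hya hu hm1 hm2
      refine ⟨p ++ (g :: (u' ++ d :: a :: ((x₀ :: v) ++ [h]))) ++ s,
        uchain_two
          (upStep_of_eq g h x₀ d (u' ++ [a]) v p s (upAt_left hp hxy) (by simp) rfl)
          (upStep_of_eq g h a d u' (x₀ :: v) p s hp (by simp) rfl),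
        ple_two
          (permutoStep_of_eq (p ++ g :: u') ((a :: (v ++ [h])) ++ s) x₀ d
            (lt_trans hxy (upAt_ad hp)) (by simp) rfl)
          (permutoStep_of_eq (p ++ g :: u' ++ [d]) ((v ++ [h]) ++ s) x₀ a hxy
            (by simp) (by simp))⟩
    · -- (a, d) : ν = y
      replace hxa := hxa.symm
      replace hyd := hyd.symm
      subst hxa hyd hm1 hm2
      exact ⟨p ++ (g :: (u ++ d :: a :: (v ++ [h]))) ++ s,
        uchain_of_eq (by simp), ple_refl _⟩
    · -- (d, head v)
      replace hxd := hxd.symm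
      subst hxd hv hm1 hm2
      refine ⟨p ++ (g :: ((u ++ [y₀]) ++ d :: a :: (v' ++ [h]))) ++ s,
        uchain_two
          (upStep_of_eq g h a y₀ u (d :: v') p s (upAt_right hp hxy) (by simp) rfl)
          (upStep_of_eq g h a d (u ++ [y₀]) v' p s hp (by simp) rfl),
        ple_two
          (permutoStep_of_eq (p ++ g :: u ++ [d]) ((v' ++ [h]) ++ s) a y₀
            (lt_trans (upAt_ad hp) hxy) (by simp) rfl)
          (permutoStep_of_eq (p ++ g :: u) (a :: ((v' ++ [h]) ++ s)) d y₀ hxy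
            (by simp) (by simp))⟩
    · -- (d, h) impossible
      exfalso; subst hxd hyh; have := upAt_hd hp; omega
    · -- inside v
      subst hv hm1 hm2
      exact ⟨p ++ (g :: (u ++ d :: a :: ((v1 ++ y₀ :: x₀ :: t) ++ [h]))) ++ s,
        Relation.ReflTransGen.single
          (upStep_of_eq g h a d u (v1 ++ y₀ :: x₀ :: t) p s hp (by simp) rfl),
        ple_single (permutoStep_of_eq (p ++ (g :: (u ++ d :: a :: v1))) ((t ++ [h]) ++ s)
          x₀ y₀ hxy (by simp) (by simp))⟩
    · -- (last v, h)
      replace hyh := hyh.symm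
      subst hyh hv hm1 hm2
      exact ⟨p ++ (g :: (u ++ d :: a :: (v' ++ [h]))) ++ (x₀ :: s),
        Relation.ReflTransGen.single
          (upStep_of_eq g h a d u v' p (x₀ :: s) hp (by simp) rfl),
        ple_single (permutoStep_of_eq (p ++ (g :: (u ++ d :: a :: v'))) s x₀ h hxy
          (by simp) (by simp))⟩
  · -- boundary factor | s
    have hm' : g :: (u ++ a :: d :: v) = m' ∧ h = x₀ := by
      have : (g :: (u ++ a :: d :: v)) ++ [h] = m' ++ [x₀] := by rw [← hm]; simp
      exact snoc_inj this
    obtain ⟨hm1, hhx⟩ := hm'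
    subst hhx hm1 hs hP hS
    exact ⟨p ++ (g :: (u ++ d :: a :: ((v ++ [y₀]) ++ [h]))) ++ S,
      Relation.ReflTransGen.single
        (upStep_of_eq g h a d u (v ++ [y₀]) p S hp (by simp) rfl),
      ple_single (permutoStep_of_eq (p ++ (g :: (u ++ d :: a :: v))) S h y₀ hxy
        (by simp) (by simp))⟩
  · -- swap inside s
    subst hs hP
    exact ⟨p ++ (g :: (u ++ d :: a :: (v ++ [h]))) ++ (t ++ y₀ :: x₀ :: S),
      Relation.ReflTransGen.single
        (upStep_of_eq g h a d u v p (t ++ y₀ :: x₀ :: S) hp (by simp) rfl),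
      ple_single (permutoStep_of_eq (p ++ (g :: (u ++ d :: a :: (v ++ [h]))) ++ t) S
        x₀ y₀ hxy (by simp) (by simp))⟩

theorem dn_of_up {a b : List ℕ} (h : UpStep b a) : Dn a b := h
theorem dchain_of_eq {a b : List ℕ} (h : a = b) : Relation.ReflTransGen Dn a b :=
  h ▸ Relation.ReflTransGen.refl
theorem dchain_single {a b : List ℕ} (h : UpStep b a) : Relation.ReflTransGen Dn a b :=
  Relation.ReflTransGen.single h
theorem dchain_two {a b c : List ℕ} (h1 : UpStep b a) (h2 : UpStep c b) :
    Relation.ReflTransGen Dn a c :=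
  Relation.ReflTransGen.head (r := Dn) h1 (Relation.ReflTransGen.single h2)

set_option maxHeartbeats 1000000 in
theorem coreDown {y' y w : List ℕ} (hup : UpStep y' y) (hst : PermutoStep w y) :
    ∃ τ, Relation.ReflTransGen Dn w τ ∧ PermutoLe τ y' := by
  obtain ⟨g, h, a, d, u, v, p, s, hp, rfl, rfl⟩ := hup
  obtain ⟨P, S, x₀, y₀, hxy, rfl, hy⟩ := hst
  rcases decomp p (g :: (u ++ d :: a :: (v ++ [h]))) s P S y₀ x₀ (by simp) hy.symm with
    ⟨t, hpe, hS⟩ | ⟨p', m', hpe, hm, hP, hS⟩ | ⟨m1, m2, hm, hP, hS⟩ |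
    ⟨m', s', hm, hs, hP, hS⟩ | ⟨t, hs, hP⟩
  · -- swap inside p
    subst hpe hS
    exact ⟨(P ++ x₀ :: y₀ :: t) ++ (g :: (u ++ a :: d :: (v ++ [h]))) ++ s,
      dchain_single (upStep_of_eq g h a d u v (P ++ x₀ :: y₀ :: t) s hp rfl (by simp)),
      ple_single (permutoStep_of_eq P (t ++ (g :: (u ++ a :: d :: (v ++ [h]))) ++ s)
        x₀ y₀ hxy (by simp) (by simp))⟩
  · -- boundary p | factor : pair (y₀, g)
    obtain ⟨hg, hm2⟩ : g = x₀ ∧ u ++ d :: a :: (v ++ [h]) = m' := by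
      injection hm with h1 h2; exact ⟨h1, h2⟩
    subst hg hm2 hpe hP hS
    exact ⟨P ++ (g :: ((y₀ :: u) ++ a :: d :: (v ++ [h]))) ++ s,
      dchain_single (upStep_of_eq g h a d (y₀ :: u) v P s hp rfl (by simp)),
      ple_single (permutoStep_of_eq P ((u ++ a :: d :: (v ++ [h])) ++ s) g y₀ hxy
        (by simp) (by simp))⟩
  · -- swap inside the factor
    subst hP hS
    rcases inner_decomp m1 m2 u v g h d a y₀ x₀ hm.symm with
      ⟨u', hu, hyg, hm1, hm2⟩ | ⟨hu, hyg, hxd, hm1, hm2⟩ | ⟨u1, t, hu, hm1, hm2⟩ |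
      ⟨u', hu, hxd, hm1, hm2⟩ | ⟨hyd, hxa, hm1, hm2⟩ | ⟨v', hv, hya, hm1, hm2⟩ |
      ⟨hv, hya, hxh, hm1, hm2⟩ | ⟨v1, t, hv, hm1, hm2⟩ | ⟨v', hv, hxh, hm1, hm2⟩
    · -- (g, head u)
      replace hyg := hyg.symm
      subst hu hyg hm1 hm2
      exact ⟨(p ++ [x₀]) ++ (g :: (u' ++ a :: d :: (v ++ [h]))) ++ s,
        dchain_single (upStep_of_eq g h a d u' v (p ++ [x₀]) s hp rfl (by simp)),
        ple_single (permutoStep_of_eq p ((u' ++ a :: d :: (v ++ [h])) ++ s) x₀ g hxy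
          (by simp) (by simp))⟩
    · -- (g, d) impossible
      exfalso; subst hyg hxd; have := upAt_gd hp; omega
    · -- inside u
      subst hu hm1 hm2
      exact ⟨p ++ (g :: ((u1 ++ x₀ :: y₀ :: t) ++ a :: d :: (v ++ [h]))) ++ s,
        dchain_single
          (upStep_of_eq g h a d (u1 ++ x₀ :: y₀ :: t) v p s hp rfl (by simp)),
        ple_single (permutoStep_of_eq (p ++ g :: u1) ((t ++ a :: d :: (v ++ [h])) ++ s)
          x₀ y₀ hxy (by simp) (by simp))⟩
    · -- (last u, d)
      replace hxd := hxd.symm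
      subst hxd hu hm1 hm2
      refine ⟨p ++ (g :: (u' ++ a :: d :: ((y₀ :: v) ++ [h]))) ++ s,
        dchain_two
          (upStep_of_eq g h a y₀ (u' ++ [d]) v p s (upAt_right hp hxy) rfl (by simp))
          (upStep_of_eq g h a d u' (y₀ :: v) p s hp rfl (by simp)),
        ple_two
          (permutoStep_of_eq (p ++ g :: u' ++ [a]) ((v ++ [h]) ++ s) d y₀ hxy
            (by simp) rfl)
          (permutoStep_of_eq (p ++ g :: u') (d :: ((v ++ [h]) ++ s)) a y₀
            (lt_trans (upAt_ad hp) hxy) (by simp) (by simp))⟩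
    · -- (d, a) : w = y'
      replace hyd := hyd.symm
      replace hxa := hxa.symm
      subst hyd hxa hm1 hm2
      exact ⟨p ++ (g :: (u ++ a :: d :: (v ++ [h]))) ++ s,
        dchain_of_eq (by simp), ple_refl _⟩
    · -- (a, head v)
      replace hya := hya.symm
      subst hya hv hm1 hm2
      refine ⟨p ++ (g :: ((u ++ [x₀]) ++ a :: d :: (v' ++ [h]))) ++ s,
        dchain_two
          (upStep_of_eq g h x₀ d u (a :: v') p s (upAt_left hp hxy) rfl (by simp))
          (upStep_of_eq g h a d (u ++ [x₀]) v' p s hp rfl (by simp)),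
        ple_two
          (permutoStep_of_eq (p ++ g :: u) (d :: ((v' ++ [h]) ++ s)) x₀ a hxy
            (by simp) rfl)
          (permutoStep_of_eq (p ++ g :: u ++ [a]) ((v' ++ [h]) ++ s) x₀ d
            (lt_trans hxy (upAt_ad hp)) (by simp) (by simp))⟩
    · -- (a, h) impossible
      exfalso; subst hya hxh; have := upAt_ah hp; omega
    · -- inside v
      subst hv hm1 hm2
      exact ⟨p ++ (g :: (u ++ a :: d :: ((v1 ++ x₀ :: y₀ :: t) ++ [h]))) ++ s,
        dchain_single
          (upStep_of_eq g h a d u (v1 ++ x₀ :: y₀ :: t) p s hp rfl (by simp)),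
        ple_single (permutoStep_of_eq (p ++ (g :: (u ++ a :: d :: v1))) ((t ++ [h]) ++ s)
          x₀ y₀ hxy (by simp) (by simp))⟩
    · -- (last v, h)
      replace hxh := hxh.symm
      subst hxh hv hm1 hm2
      exact ⟨p ++ (g :: (u ++ a :: d :: (v' ++ [h]))) ++ (y₀ :: s),
        dchain_single (upStep_of_eq g h a d u v' p (y₀ :: s) hp rfl (by simp)),
        ple_single (permutoStep_of_eq (p ++ (g :: (u ++ a :: d :: v'))) s h y₀
          (by omega) (by simp) (by simp))⟩
    -- note: here x₀ = h, hxy : h < y₀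
  · -- boundary factor | s : factor ends with y₀ = h
    have hm' : g :: (u ++ d :: a :: v) = m' ∧ h = y₀ := by
      have : (g :: (u ++ d :: a :: v)) ++ [h] = m' ++ [y₀] := by rw [← hm]; simp
      exact snoc_inj this
    obtain ⟨hm1, hhy⟩ := hm'
    subst hhy hm1 hs hP hS
    exact ⟨p ++ (g :: (u ++ a :: d :: ((v ++ [x₀]) ++ [h]))) ++ S,
      dchain_single (upStep_of_eq g h a d u (v ++ [x₀]) p S hp rfl (by simp)),
      ple_single (permutoStep_of_eq (p ++ (g :: (u ++ a :: d :: v))) S x₀ h hxy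
        (by simp) (by simp))⟩
  · -- swap inside s
    subst hs hP
    exact ⟨p ++ (g :: (u ++ a :: d :: (v ++ [h]))) ++ (t ++ x₀ :: y₀ :: S),
      dchain_single
        (upStep_of_eq g h a d u v p (t ++ x₀ :: y₀ :: S) hp rfl (by simp)),
      ple_single (permutoStep_of_eq (p ++ (g :: (u ++ a :: d :: (v ++ [h]))) ++ t) S
        x₀ y₀ hxy (by simp) (by simp))⟩

theorem masterUp : ∀ k : ℕ,
    (∀ x : List ℕ, phi x ≤ k → ∀ y ν, UpStep x y → PermutoLe x ν →
      ∃ μ, Relation.ReflTransGen UpStep ν μ ∧ PermutoLe y μ) ∧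
    (∀ x : List ℕ, phi x ≤ k → ∀ y ν, Relation.ReflTransGen UpStep x y → PermutoLe x ν →
      ∃ μ, Relation.ReflTransGen UpStep ν μ ∧ PermutoLe y μ) := by
  intro k
  induction k with
  | zero =>
      constructor
      · intro x hphi y ν hup _
        have := (step_phi (upStep_permutoStep hup)).2
        omega
      · intro x hphi y ν hchain hle
        have hy : y = x := by
          rcases Relation.ReflTransGen.cases_head hchain with h | ⟨c, hc, _⟩
          · exact h.symm
          · have := (step_phi (upStep_permutoStep hc)).2; omega
        have hν : ν = x := by
          rcases Relation.ReflTransGen.cases_head hle with h | ⟨c, hc, _⟩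
          · exact h.symm
          · have := (step_phi hc).2; omega
        exact ⟨ν, Relation.ReflTransGen.refl, by rw [hy, hν]; exact ple_refl x⟩
  | succ k ih =>
      have M1 : ∀ x : List ℕ, phi x ≤ k + 1 → ∀ y ν, UpStep x y → PermutoLe x ν →
          ∃ μ, Relation.ReflTransGen UpStep ν μ ∧ PermutoLe y μ := by
        intro x hphi y ν hup hle
        rcases Relation.ReflTransGen.cases_head hle with rfl | ⟨w, hw, hle'⟩
        · exact ⟨y, Relation.ReflTransGen.single hup, ple_refl y⟩
        · obtain ⟨μ1, hc1, hp1⟩ := coreUp hup hw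
          have hphiw : phi w ≤ k := by have := step_phi hw; omega
          obtain ⟨μ, hc, hp⟩ := ih.2 w hphiw μ1 ν hc1 hle'
          exact ⟨μ, hc, ple_trans hp1 hp⟩
      refine ⟨M1, ?_⟩
      intro x hphi y ν hchain hle
      rcases Relation.ReflTransGen.cases_head hchain with rfl | ⟨z, hxz, hzy⟩
      · exact ⟨ν, Relation.ReflTransGen.refl, hle⟩
      · obtain ⟨μ2, hc2, hp2⟩ := M1 x hphi z ν hxz hle
        have hphiz : phi z ≤ k := by
          have := step_phi (upStep_permutoStep hxz); omega
        obtain ⟨μ, hc, hp⟩ := ih.2 z hphiz y μ2 hzy hp2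
        exact ⟨μ, Relation.ReflTransGen.trans hc2 hc, hp⟩

theorem masterDown : ∀ k : ℕ,
    (∀ y : List ℕ, invc y ≤ k → ∀ y' w, UpStep y' y → PermutoLe w y →
      ∃ τ, Relation.ReflTransGen Dn w τ ∧ PermutoLe τ y') ∧
    (∀ y : List ℕ, invc y ≤ k → ∀ y' w, Relation.ReflTransGen Dn y y' → PermutoLe w y →
      ∃ τ, Relation.ReflTransGen Dn w τ ∧ PermutoLe τ y') := by
  intro k
  induction k with
  | zero =>
      constructor
      · intro y hinv y' w hup _
        have := permutoStep_invc (upStep_permutoStep hup)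
        omega
      · intro y hinv y' w hchain hle
        have hy' : y' = y := by
          rcases Relation.ReflTransGen.cases_head hchain with h | ⟨c, hc, _⟩
          · exact h.symm
          · have := permutoStep_invc (upStep_permutoStep hc); omega
        subst hy'
        exact ⟨w, Relation.ReflTransGen.refl, hle⟩
  | succ k ih =>
      have M1 : ∀ y : List ℕ, invc y ≤ k + 1 → ∀ y' w, UpStep y' y → PermutoLe w y →
          ∃ τ, Relation.ReflTransGen Dn w τ ∧ PermutoLe τ y' := by
        intro y hinv y' w hup hle
        rcases Relation.ReflTransGen.cases_tail hle with rfl | ⟨c, hwc, hcy⟩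
        · exact ⟨y', Relation.ReflTransGen.single hup, ple_refl y'⟩
        · obtain ⟨τ1, hd1, hp1⟩ := coreDown hup hcy
          have hinvc : invc c ≤ k := by have := permutoStep_invc hcy; omega
          obtain ⟨τ, hd, hp⟩ := ih.2 c hinvc τ1 w hd1 hwc
          exact ⟨τ, hd, ple_trans hp hp1⟩
      refine ⟨M1, ?_⟩
      intro y hinv y' w hchain hle
      rcases Relation.ReflTransGen.cases_head hchain with rfl | ⟨z, hyz, hzy'⟩
      · exact ⟨w, Relation.ReflTransGen.refl, hle⟩
      · obtain ⟨τ2, hd2, hp2⟩ := M1 y hinv z w hyz hle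
        have hinvz : invc z ≤ k := by
          have := permutoStep_invc (upStep_permutoStep hyz); omega
        obtain ⟨τ, hd, hp⟩ := ih.2 z hinvz y' τ2 hzy' hp2
        exact ⟨τ, Relation.ReflTransGen.trans hd2 hd, hp⟩

theorem zUp {x y : List ℕ} (h : BaxterEquiv x y) :
    (∀ ν, PermutoLe x ν → ∃ μ, BaxterEquiv ν μ ∧ PermutoLe y μ) ∧
    (∀ ν, PermutoLe y ν → ∃ μ, BaxterEquiv ν μ ∧ PermutoLe x μ) := by
  induction h with
  | rel a b hab =>
      rcases baxterStep_up hab with hup | hup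
      · constructor
        · intro ν hle
          obtain ⟨μ, hc, hp⟩ := (masterUp (phi a)).1 a le_rfl b ν hup hle
          exact ⟨μ, upChain_equiv hc, hp⟩
        · intro ν hle
          exact ⟨ν, Relation.EqvGen.refl ν,
            ple_trans (ple_single (upStep_permutoStep hup)) hle⟩
      · constructor
        · intro ν hle
          exact ⟨ν, Relation.EqvGen.refl ν,
            ple_trans (ple_single (upStep_permutoStep hup)) hle⟩
        · intro ν hle
          obtain ⟨μ, hc, hp⟩ := (masterUp (phi b)).1 b le_rfl a ν hup hle
          exact ⟨μ, upChain_equiv hc, hp⟩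
  | refl a =>
      exact ⟨fun ν h => ⟨ν, Relation.EqvGen.refl ν, h⟩,
        fun ν h => ⟨ν, Relation.EqvGen.refl ν, h⟩⟩
  | symm a b _ ih => exact ⟨ih.2, ih.1⟩
  | trans a b c _ _ ih1 ih2 =>
      constructor
      · intro ν hle
        obtain ⟨μ1, he1, hp1⟩ := ih1.1 ν hle
        obtain ⟨μ2, he2, hp2⟩ := ih2.1 μ1 hp1
        exact ⟨μ2, Relation.EqvGen.trans _ _ _ he1 he2, hp2⟩
      · intro ν hle
        obtain ⟨μ1, he1, hp1⟩ := ih2.2 ν hle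
        obtain ⟨μ2, he2, hp2⟩ := ih1.2 μ1 hp1
        exact ⟨μ2, Relation.EqvGen.trans _ _ _ he1 he2, hp2⟩

theorem zDown {x y : List ℕ} (h : BaxterEquiv x y) :
    (∀ w, PermutoLe w x → ∃ τ, BaxterEquiv w τ ∧ PermutoLe τ y) ∧
    (∀ w, PermutoLe w y → ∃ τ, BaxterEquiv w τ ∧ PermutoLe τ x) := by
  induction h with
  | rel a b hab =>
      rcases baxterStep_up hab with hup | hup
      · constructor
        · intro w hle
          exact ⟨w, Relation.EqvGen.refl w,
            ple_trans hle (ple_single (upStep_permutoStep hup))⟩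
        · intro w hle
          obtain ⟨τ, hd, hp⟩ := (masterDown (invc b)).1 b le_rfl a w hup hle
          exact ⟨τ, dnChain_equiv hd, hp⟩
      · constructor
        · intro w hle
          obtain ⟨τ, hd, hp⟩ := (masterDown (invc a)).1 a le_rfl b w hup hle
          exact ⟨τ, dnChain_equiv hd, hp⟩
        · intro w hle
          exact ⟨w, Relation.EqvGen.refl w,
            ple_trans hle (ple_single (upStep_permutoStep hup))⟩
  | refl a =>
      exact ⟨fun w h => ⟨w, Relation.EqvGen.refl w, h⟩,
        fun w h => ⟨w, Relation.EqvGen.refl w, h⟩⟩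
  | symm a b _ ih => exact ⟨ih.2, ih.1⟩
  | trans a b c _ _ ih1 ih2 =>
      constructor
      · intro w hle
        obtain ⟨τ1, he1, hp1⟩ := ih1.1 w hle
        obtain ⟨τ2, he2, hp2⟩ := ih2.1 τ1 hp1
        exact ⟨τ2, Relation.EqvGen.trans _ _ _ he1 he2, hp2⟩
      · intro w hle
        obtain ⟨τ1, he1, hp1⟩ := ih2.2 w hle
        obtain ⟨τ2, he2, hp2⟩ := ih1.2 τ1 hp1
        exact ⟨τ2, Relation.EqvGen.trans _ _ _ he1 he2, hp2⟩


/-- the maps `σ ↦ σ↑` and `σ ↦ σ↓` (maximal and minimal elements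
of the Baxter classes) are order-preserving for the permutohedron order. -/
theorem baxter_minmax_monotone (n : ℕ) (σ ν σu νu σd νd : List ℕ)
    (hσ : IsPerm n σ) (hν : IsPerm n ν)
    (hσu : IsPerm n σu) (hνu : IsPerm n νu) (hσd : IsPerm n σd) (hνd : IsPerm n νd)
    (hle : PermutoLe σ ν)
    (hσu1 : BaxterEquiv σ σu)
    (hσu2 : ∀ τ, IsPerm n τ → BaxterEquiv σ τ → PermutoLe τ σu)
    (hνu1 : BaxterEquiv ν νu)
    (hνu2 : ∀ τ, IsPerm n τ → BaxterEquiv ν τ → PermutoLe τ νu)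
    (hσd1 : BaxterEquiv σ σd)
    (hσd2 : ∀ τ, IsPerm n τ → BaxterEquiv σ τ → PermutoLe σd τ)
    (hνd1 : BaxterEquiv ν νd)
    (hνd2 : ∀ τ, IsPerm n τ → BaxterEquiv ν τ → PermutoLe νd τ) :
    PermutoLe σu νu ∧ PermutoLe σd νd := by
  constructor
  · obtain ⟨μ, he, hp⟩ := (zUp hσu1).1 ν hle
    have hμ : IsPerm n μ := (baxterEquiv_perm he).symm.trans hν
    exact ple_trans hp (hνu2 μ hμ he)
  · obtain ⟨τ, he, hp⟩ := (zDown hνd1).1 σ hle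
    have hτ : IsPerm n τ := (baxterEquiv_perm he).symm.trans hσ
    exact ple_trans (hσd2 τ hτ he) hp
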